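/- Let (T_α, ℏ) be a unital matrix regularization, f a nowhere-vanishing smooth function, and f̂_α a sequence C⁰-converging to f such that each f̂_α is invertible with ||f̂_α^{-1}|| uniformly bounded. Then f̂_α^{-1} C⁰-converges to 1/f, i.e. lim_α ||f̂_α^{-1} − T_α(1/f)|| = 0. -/
import Mathlib


open scoped BigOperators Topology

/-- The operator norm of a complex `N × N` matrix (acting on `ℓ²`). -/
noncomputable def opn {N : ℕ} (M : Matrix (Fin N) (Fin N) ℂ) : ℝ :=
  ‖(Matrix.toEuclideanCLM (𝕜 := ℂ) M :
      EuclideanSpace ℂ (Fin N) →L[ℂ] EuclideanSpace ℂ (Fin N))‖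

lemma opn_nonneg {N : ℕ} (M : Matrix (Fin N) (Fin N) ℂ) : 0 ≤ opn M :=
  norm_nonneg _

lemma opn_add_le {N : ℕ} (A B : Matrix (Fin N) (Fin N) ℂ) :
    opn (A + B) ≤ opn A + opn B := by
  unfold opn; rw [map_add]; exact norm_add_le _ _

lemma opn_mul_le {N : ℕ} (A B : Matrix (Fin N) (Fin N) ℂ) :
    opn (A * B) ≤ opn A * opn B := by
  unfold opn; rw [map_mul]; exact norm_mul_le _ _

lemma opn_sub_comm {N : ℕ} (A B : Matrix (Fin N) (Fin N) ℂ) :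
    opn (A - B) = opn (B - A) := by
  unfold opn; rw [← norm_neg, ← map_neg, neg_sub]

/-- In a unital matrix regularization, if `f̂_α` `C⁰`-converges to a nowhere
vanishing (hence invertible) `f` and the `f̂_α` are invertible with uniformly
bounded inverses, then `f̂_α⁻¹` `C⁰`-converges to `1/f`. -/
theorem inverse_sequence_converges
    {F : Type*} [CommRing F] [Algebra ℝ F]
    (I : F →ₗ[ℝ] ℝ)
    (Nseq : ℕ → ℕ) (hmono : StrictMono Nseq) (hpos : ∀ α, 0 < Nseq α)
    (ℏ : ℕ → ℝ) (hℏpos : ∀ α, 0 < ℏ α)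
    (T : ∀ α : ℕ, F →ₗ[ℝ] Matrix (Fin (Nseq α)) (Fin (Nseq α)) ℂ)
    (hherm : ∀ α (g : F), (T α g).IsHermitian)
    (hbound : ∀ g : F, ∃ C : ℝ, ∀ α, opn (T α g) ≤ C)
    (hprod : ∀ g k : F,
      Filter.Tendsto (fun α => opn (T α (g * k) - T α g * T α k))
        Filter.atTop (𝓝 0))
    (hunital :
      Filter.Tendsto (fun α => opn (T α 1 - 1)) Filter.atTop (𝓝 0))
    -- `f` nowhere vanishing: `finv = 1/f` is a smooth function with `f·(1/f) = 1`
    (f finv : F) (hfinv : f * finv = 1)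
    (fh fhinv : ∀ α, Matrix (Fin (Nseq α)) (Fin (Nseq α)) ℂ)
    (hfconv : Filter.Tendsto (fun α => opn (fh α - T α f)) Filter.atTop (𝓝 0))
    (hinvl : ∀ α, fh α * fhinv α = 1)
    (hinvr : ∀ α, fhinv α * fh α = 1)
    (hub : ∃ C : ℝ, ∀ α, opn (fhinv α) ≤ C) :
    Filter.Tendsto (fun α => opn (fhinv α - T α finv)) Filter.atTop (𝓝 0) := by
  obtain ⟨C, hC⟩ := hub
  obtain ⟨D, hD⟩ := hbound finv
  have hC0 : 0 ≤ C := le_trans (opn_nonneg _) (hC 0)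
  have key : ∀ α, opn (fhinv α - T α finv) ≤
      C * (opn (T α 1 - 1) + opn (T α (f * finv) - T α f * T α finv)
        + opn (fh α - T α f) * D) := by
    intro α
    have hid : fhinv α - T α finv =
        fhinv α * ((1 - T α 1) + (T α (f * finv) - T α f * T α finv)
          + (T α f - fh α) * T α finv) := by
      rw [hfinv]
      have h1 : (1 - T α 1) + (T α 1 - T α f * T α finv)
          + (T α f - fh α) * T α finv = 1 - fh α * T α finv := by
        noncomm_ring
      rw [h1, mul_sub, mul_one, ← mul_assoc, hinvr α, one_mul]
    rw [hid]
    calc opn (fhinv α * ((1 - T α 1) + (T α (f * finv) - T α f * T α finv)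
          + (T α f - fh α) * T α finv))
        ≤ opn (fhinv α) * opn ((1 - T α 1) + (T α (f * finv) - T α f * T α finv)
          + (T α f - fh α) * T α finv) := opn_mul_le _ _
      _ ≤ C * (opn (T α 1 - 1) + opn (T α (f * finv) - T α f * T α finv)
          + opn (fh α - T α f) * D) := by
          apply mul_le_mul (hC α) _ (opn_nonneg _) hC0
          calc opn ((1 - T α 1) + (T α (f * finv) - T α f * T α finv)
                + (T α f - fh α) * T α finv)
              ≤ opn ((1 - T α 1) + (T α (f * finv) - T α f * T α finv))
                + opn ((T α f - fh α) * T α finv) := opn_add_le _ _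
            _ ≤ (opn (1 - T α 1) + opn (T α (f * finv) - T α f * T α finv))
                + opn ((T α f - fh α) * T α finv) := by
                  gcongr; exact opn_add_le _ _
            _ ≤ opn (T α 1 - 1) + opn (T α (f * finv) - T α f * T α finv)
                + opn (fh α - T α f) * D := by
                  rw [opn_sub_comm (1 : Matrix _ _ ℂ) (T α 1)]
                  gcongr
                  calc opn ((T α f - fh α) * T α finv)
                      ≤ opn (T α f - fh α) * opn (T α finv) := opn_mul_le _ _
                    _ ≤ opn (fh α - T α f) * D := by
                        rw [opn_sub_comm]
                        exact mul_le_mul_of_nonneg_left (hD α) (opn_nonneg _)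
  have hlim : Filter.Tendsto (fun α => C * (opn (T α 1 - 1)
      + opn (T α (f * finv) - T α f * T α finv) + opn (fh α - T α f) * D))
      Filter.atTop (𝓝 0) := by
    have := (((hunital.add (hprod f finv)).add
      (hfconv.mul_const D)).const_mul C)
    simpa using this
  exact squeeze_zero (fun α => opn_nonneg _) key hlim
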